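/- Fix m ∈ ℕ and h ∈ (0,1), set μ_m := −1/log₂(a_m) and γ := 2^{m/μ_m}·f_m(h). Then for every n ≥ m and every subset S ⊆ {0,1}^n with |S| ≥ 2^n·(1 − h − (γ/4)·2^{−n/μ_m}), the sum of the error probabilities of the sub-channels indexed by S satisfies Σ_{b∈S} H_b(h)/2 ≥ (γ²/32)·2^{n(1 − 2/μ_m)}. -/
import Mathlib


/-- The polynomials `f_n : [0,1] → ℝ` defined by `f_0(h) = h(1-h)` and
`f_n(h) = (f_{n-1}(h^2) + f_{n-1}(1-(1-h)^2))/2`. -/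
noncomputable def f : ℕ → ℝ → ℝ
  | 0, h => h * (1 - h)
  | n + 1, h => (f n (h ^ 2) + f n (1 - (1 - h) ^ 2)) / 2

lemma sq_mem_Icc {h : ℝ} (hh : h ∈ Set.Icc (0:ℝ) 1) : h ^ 2 ∈ Set.Icc (0:ℝ) 1 := by
  obtain ⟨h0, h1⟩ := hh; constructor <;> nlinarith

lemma bar_mem_Icc {h : ℝ} (hh : h ∈ Set.Icc (0:ℝ) 1) : 1 - (1 - h) ^ 2 ∈ Set.Icc (0:ℝ) 1 := by
  obtain ⟨h0, h1⟩ := hh; constructor <;> nlinarith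

lemma sq_mem_Ioo {h : ℝ} (hh : h ∈ Set.Ioo (0:ℝ) 1) : h ^ 2 ∈ Set.Ioo (0:ℝ) 1 := by
  obtain ⟨h0, h1⟩ := hh; constructor <;> nlinarith

lemma bar_mem_Ioo {h : ℝ} (hh : h ∈ Set.Ioo (0:ℝ) 1) : 1 - (1 - h) ^ 2 ∈ Set.Ioo (0:ℝ) 1 := by
  obtain ⟨h0, h1⟩ := hh; constructor <;> nlinarith

lemma f_mem (n : ℕ) : ∀ {h : ℝ}, h ∈ Set.Icc (0:ℝ) 1 → f n h ∈ Set.Icc (0:ℝ) (1/4) := by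
  induction n with
  | zero => intro h ⟨h0, h1⟩; constructor <;> simp only [f] <;> nlinarith [sq_nonneg (2*h-1)]
  | succ n ih =>
    intro h hh
    obtain ⟨a1, a2⟩ := ih (sq_mem_Icc hh)
    obtain ⟨b1, b2⟩ := ih (bar_mem_Icc hh)
    constructor <;> [simp [f]; simp [f]] <;> linarith

lemma f_pos (n : ℕ) : ∀ {h : ℝ}, h ∈ Set.Ioo (0:ℝ) 1 → 0 < f n h := by
  induction n with
  | zero => intro h ⟨h0, h1⟩; simp [f]; nlinarith
  | succ n ih =>
    intro h hh
    have := ih (sq_mem_Ioo hh)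
    have := ih (bar_mem_Ioo hh)
    simp only [f]; linarith

lemma f_succ_ge (n : ℕ) : ∀ {h : ℝ}, h ∈ Set.Icc (0:ℝ) 1 → 3/4 * f n h ≤ f (n+1) h := by
  induction n with
  | zero =>
    intro h ⟨h0, h1⟩
    show 3/4 * (h * (1-h)) ≤ (h^2 * (1 - h^2) + (1 - (1-h)^2) * (1 - (1 - (1-h)^2)))/2
    nlinarith [mul_nonneg (mul_nonneg h0 (by linarith : (0:ℝ) ≤ 1 - h)) (sq_nonneg (2*h - 1))]
  | succ n ih =>
    intro h hh
    have h1 := ih (sq_mem_Icc hh)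
    have h2 := ih (bar_mem_Icc hh)
    show 3/4 * ((f n (h^2) + f n (1 - (1-h)^2))/2) ≤ (f (n+1) (h^2) + f (n+1) (1 - (1-h)^2))/2
    linarith

lemma f_succ_le (n : ℕ) : ∀ {h : ℝ}, h ∈ Set.Icc (0:ℝ) 1 → f (n+1) h ≤ f n h := by
  induction n with
  | zero =>
    intro h ⟨h0, h1⟩
    show (h^2 * (1 - h^2) + (1 - (1-h)^2) * (1 - (1 - (1-h)^2)))/2 ≤ h * (1-h)
    nlinarith [mul_nonneg (mul_nonneg h0 (by linarith : (0:ℝ) ≤ 1 - h)) (sq_nonneg (2*h - 1))]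
  | succ n ih =>
    intro h hh
    have h1 := ih (sq_mem_Icc hh)
    have h2 := ih (bar_mem_Icc hh)
    show (f (n+1) (h^2) + f (n+1) (1 - (1-h)^2))/2 ≤ (f n (h^2) + f n (1 - (1-h)^2))/2
    linarith

/-- `a_m := inf_{h ∈ (0,1)} f_{m+1}(h) / f_m(h)`. -/
noncomputable def a (m : ℕ) : ℝ :=
  sInf ((fun h => f (m + 1) h / f m h) '' Set.Ioo (0 : ℝ) 1)


lemma ratio_set_nonempty (m : ℕ) : ((fun h => f (m + 1) h / f m h) '' Set.Ioo (0 : ℝ) 1).Nonempty :=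
  ⟨_, ⟨1/2, by norm_num, rfl⟩⟩

lemma ratio_ge (m : ℕ) {x : ℝ} (hx : x ∈ (fun h => f (m + 1) h / f m h) '' Set.Ioo (0 : ℝ) 1) :
    3/4 ≤ x := by
  obtain ⟨h, hh, rfl⟩ := hx
  rw [le_div_iff₀ (f_pos m hh)]
  simpa [mul_comm] using f_succ_ge m (Set.Ioo_subset_Icc_self hh)

lemma ratio_bddBelow (m : ℕ) : BddBelow ((fun h => f (m + 1) h / f m h) '' Set.Ioo (0 : ℝ) 1) :=
  ⟨3/4, fun x hx => ratio_ge m hx⟩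

lemma a_ge (m : ℕ) : 3/4 ≤ a m := le_csInf (ratio_set_nonempty m) (fun x hx => ratio_ge m hx)

lemma a_pos (m : ℕ) : 0 < a m := lt_of_lt_of_le (by norm_num) (a_ge m)

lemma a_le (m : ℕ) : a m ≤ 1 := by
  have h12 : (1/2 : ℝ) ∈ Set.Ioo (0:ℝ) 1 := by norm_num
  have := csInf_le (ratio_bddBelow m) ⟨1/2, h12, rfl⟩
  refine this.trans ?_
  rw [div_le_one (f_pos m h12)]
  exact f_succ_le m (Set.Ioo_subset_Icc_self h12)

lemma f_succ_ge_a (m : ℕ) {h : ℝ} (hh : h ∈ Set.Ioo (0:ℝ) 1) : a m * f m h ≤ f (m+1) h := by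
  have := csInf_le (ratio_bddBelow m) ⟨h, hh, rfl⟩
  calc a m * f m h ≤ f (m+1) h / f m h * f m h :=
        mul_le_mul_of_nonneg_right this (f_pos m hh).le
    _ = f (m+1) h := div_mul_cancel₀ _ (f_pos m hh).ne'

lemma f_succ_ge_a' (m n : ℕ) (hn : m ≤ n) : ∀ {h : ℝ}, h ∈ Set.Ioo (0:ℝ) 1 →
    a m * f n h ≤ f (n+1) h := by
  induction n, hn using Nat.le_induction with
  | base => exact fun hh => f_succ_ge_a m hh
  | succ n hn ih =>
    intro h hh
    have h1 := ih (sq_mem_Ioo hh)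
    have h2 := ih (bar_mem_Ioo hh)
    show a m * ((f n (h^2) + f n (1 - (1-h)^2))/2) ≤ (f (n+1) (h^2) + f (n+1) (1 - (1-h)^2))/2
    have h3 := (a_pos m).le; nlinarith

lemma f_ge_a_pow (m n : ℕ) (hn : m ≤ n) {h : ℝ} (hh : h ∈ Set.Ioo (0:ℝ) 1) :
    a m ^ (n - m) * f m h ≤ f n h := by
  induction n, hn using Nat.le_induction with
  | base => simp
  | succ n hn ih =>
    have step := f_succ_ge_a' m n hn hh
    have : a m * (a m ^ (n - m) * f m h) ≤ a m * f n h :=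
      mul_le_mul_of_nonneg_left ih (a_pos m).le
    calc a m ^ (n + 1 - m) * f m h = a m * (a m ^ (n - m) * f m h) := by
          rw [Nat.succ_sub hn, pow_succ]; ring
      _ ≤ a m * f n h := this
      _ ≤ f (n+1) h := step

/-- `H_b(h)`: starting from `h_0 = h`, apply `x ↦ x²` when the bit is `1` (true) and
`x ↦ 1 - (1-x)²` when the bit is `0` (false), following the bits `b 0, b 1, …` in order.
This is the erasure probability of the polar sub-channel of `BEC(h)` indexed by `b`. -/
noncomputable def Hb {n : ℕ} (b : Fin n → Bool) (h : ℝ) : ℝ :=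
  (List.ofFn b).foldl (fun x bi => if bi then x ^ 2 else 1 - (1 - x) ^ 2) h


lemma Hb_cons {n : ℕ} (c : Bool) (b : Fin n → Bool) (h : ℝ) :
    Hb (Fin.cons c b) h = Hb b (if c then h ^ 2 else 1 - (1 - h) ^ 2) := by
  simp only [Hb, List.ofFn_succ, Fin.cons_zero, Fin.cons_succ, List.foldl_cons]

lemma sum_piSucc {n : ℕ} (F : (Fin (n+1) → Bool) → ℝ) :
    ∑ b : Fin (n+1) → Bool, F b = ∑ c : Bool, ∑ b : Fin n → Bool, F (Fin.cons c b) := by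
  rw [← (Fin.consEquiv (fun _ : Fin (n+1) => Bool)).sum_comp F, Fintype.sum_prod_type]
  rfl

lemma foldl_mem : ∀ (l : List Bool) {h : ℝ}, h ∈ Set.Icc (0:ℝ) 1 →
    l.foldl (fun x bi => if bi then x ^ 2 else 1 - (1 - x) ^ 2) h ∈ Set.Icc (0:ℝ) 1 := by
  intro l
  induction l with
  | nil => intro h hh; simpa using hh
  | cons c l ih =>
    intro h hh
    rcases c with _ | _
    · simpa using ih (bar_mem_Icc hh)
    · simpa using ih (sq_mem_Icc hh)

lemma Hb_mem {n : ℕ} (b : Fin n → Bool) {h : ℝ} (hh : h ∈ Set.Icc (0:ℝ) 1) :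
    Hb b h ∈ Set.Icc (0:ℝ) 1 := foldl_mem _ hh

lemma sum_Hb (n : ℕ) : ∀ h : ℝ, ∑ b : Fin n → Bool, Hb b h = 2 ^ n * h := by
  induction n with
  | zero => intro h; simp [Hb]
  | succ n ih =>
    intro h
    rw [sum_piSucc (fun b => Hb b h)]
    simp only [Hb_cons, Fintype.sum_bool, if_true, Bool.false_eq_true, if_false, ih]
    ring

lemma sum_f0_Hb (n : ℕ) : ∀ h : ℝ, ∑ b : Fin n → Bool, Hb b h * (1 - Hb b h) = 2 ^ n * f n h := by
  induction n with
  | zero => intro h; simp [Hb, f]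
  | succ n ih =>
    intro h
    rw [sum_piSucc (fun b => Hb b h * (1 - Hb b h))]
    simp only [Hb_cons, Fintype.sum_bool, if_true, Bool.false_eq_true, if_false, ih]
    show 2^n * f n (h^2) + 2^n * f n (1 - (1-h)^2) = 2^(n+1) * ((f n (h^2) + f n (1 - (1-h)^2))/2)
    ring

/-- `μ_m := -1 / log₂ a_m`. -/
noncomputable def mu (m : ℕ) : ℝ := -1 / Real.logb 2 (a m)

/-- `γ := 2^(m/μ_m) · f_m(h)`. -/
noncomputable def gam (m : ℕ) (h : ℝ) : ℝ := (2 : ℝ) ^ ((m : ℝ) / mu m) * f m h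


lemma two_rpow_div_mu (m : ℕ) (x : ℝ) : (2:ℝ) ^ (x / mu m) = a m ^ (-x) := by
  by_cases hone : a m = 1
  · simp [mu, hone]
  · have ht : Real.logb 2 (a m) ≠ 0 :=
      (Real.logb_neg (by norm_num) (a_pos m) (lt_of_le_of_ne (a_le m) hone)).ne
    have hmu : x / mu m = -x * Real.logb 2 (a m) := by
      rw [mu]; field_simp
    rw [hmu, mul_comm, Real.rpow_mul (by norm_num), Real.rpow_logb (by norm_num) (by norm_num) (a_pos m)]

lemma gam_mul_exp (m n : ℕ) (hn : m ≤ n) (h : ℝ) :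
    gam m h * (2:ℝ) ^ (-(n:ℝ) / mu m) = a m ^ (n - m) * f m h := by
  rw [gam, two_rpow_div_mu, two_rpow_div_mu]
  calc a m ^ (-(m:ℝ)) * f m h * a m ^ (-(-(n:ℝ)))
      = a m ^ (-(m:ℝ)) * a m ^ (-(-(n:ℝ))) * f m h := by ring
    _ = a m ^ ((-(m:ℝ)) + (-(-(n:ℝ)))) * f m h := by rw [← Real.rpow_add (a_pos m)]
    _ = a m ^ (((n - m : ℕ) : ℝ)) * f m h := by
        rw [Nat.cast_sub hn]; congr 1; ring
    _ = a m ^ (n - m) * f m h := by rw [Real.rpow_natCast]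

lemma exp_split (m n : ℕ) :
    (2:ℝ) ^ ((n:ℝ) * (1 - 2 / mu m)) = 2 ^ n * ((2:ℝ) ^ (-(n:ℝ) / mu m)) ^ 2 := by
  have h1 : (n:ℝ) * (1 - 2 / mu m) = (n:ℝ) + ((-(n:ℝ) / mu m) + (-(n:ℝ) / mu m)) := by
    ring
  rw [h1, Real.rpow_add (by norm_num), Real.rpow_add (by norm_num), Real.rpow_natCast]
  ring

/-- For `n ≥ m` and every `S ⊆ {0,1}^n` with `|S| ≥ 2^n·(1 - h - (γ/4)·2^(-n/μ_m))`,
the sum of error probabilities satisfies `Σ_{b∈S} H_b(h)/2 ≥ (γ²/32)·2^(n(1 - 2/μ_m))`,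
where `γ := 2^(m/μ_m)·f_m(h)`. -/
theorem sum_error_lower_bound (m : ℕ) (h : ℝ) (hh : h ∈ Set.Ioo (0 : ℝ) 1)
    (n : ℕ) (hn : m ≤ n) (S : Finset (Fin n → Bool))
    (hS : (2 : ℝ) ^ n * (1 - h - gam m h / 4 * (2 : ℝ) ^ (-(n : ℝ) / mu m)) ≤ S.card) :
    gam m h ^ 2 / 32 * (2 : ℝ) ^ ((n : ℝ) * (1 - 2 / mu m)) ≤ ∑ b ∈ S, Hb b h / 2 := by
  have hhI : h ∈ Set.Icc (0:ℝ) 1 := Set.Ioo_subset_Icc_self hh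
  set δ : ℝ := a m ^ (n - m) * f m h with hδdef
  have hgd : gam m h * (2:ℝ) ^ (-(n:ℝ) / mu m) = δ := gam_mul_exp m n hn h
  -- basic facts about δ
  have hδ0 : 0 ≤ δ := mul_nonneg (pow_nonneg (a_pos m).le _) (f_pos m hh).le
  have hδ4 : δ ≤ 1/4 := by
    have h1 : a m ^ (n - m) ≤ 1 := pow_le_one₀ (a_pos m).le (a_le m)
    have h2 : f m h ≤ 1/4 := (f_mem m hhI).2
    have h3 : 0 ≤ f m h := (f_pos m hh).le
    nlinarith
  have hδf : δ ≤ f n h := f_ge_a_pow m n hn hh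
  -- rewrite the goal
  have hgoal : gam m h ^ 2 / 32 * (2 : ℝ) ^ ((n : ℝ) * (1 - 2 / mu m))
      = δ ^ 2 * 2 ^ n / 32 := by
    rw [exp_split m n, ← hgd]; ring
  rw [hgoal]
  -- sums
  have key : ∀ b : Fin n → Bool, 0 ≤ Hb b h ∧ Hb b h ≤ 1 := fun b => Hb_mem b hhI
  have hcard : (Sᶜ.card : ℝ) = 2 ^ n - S.card := by
    rw [Finset.card_compl, Nat.cast_sub (Finset.card_le_univ S)]
    congr 1
    simp [Fintype.card_fun]
  have hcardc : (Sᶜ.card : ℝ) ≤ 2 ^ n * (h + δ / 4) := by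
    rw [hcard]
    have hq : gam m h / 4 * (2:ℝ) ^ (-(n:ℝ) / mu m) = δ / 4 := by
      rw [← hgd]; ring
    rw [hq] at hS
    nlinarith
  have hsplit1 : ∑ b ∈ S, Hb b h + ∑ b ∈ Sᶜ, Hb b h = 2 ^ n * h := by
    rw [Finset.sum_add_sum_compl]; exact sum_Hb n h
  have hsplit2 : ∑ b ∈ S, Hb b h * (1 - Hb b h) + ∑ b ∈ Sᶜ, Hb b h * (1 - Hb b h)
      = 2 ^ n * f n h := by
    rw [Finset.sum_add_sum_compl]; exact sum_f0_Hb n h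
  have hPX : ∑ b ∈ S, Hb b h * (1 - Hb b h) ≤ ∑ b ∈ S, Hb b h := by
    refine Finset.sum_le_sum fun b _ => ?_
    obtain ⟨h0, h1⟩ := key b
    nlinarith
  have hQA : ∑ b ∈ Sᶜ, Hb b h * (1 - Hb b h) ≤ ∑ b ∈ Sᶜ, (1 - Hb b h) := by
    refine Finset.sum_le_sum fun b _ => ?_
    obtain ⟨h0, h1⟩ := key b
    nlinarith
  have hA : ∑ b ∈ Sᶜ, (1 - Hb b h) = (Sᶜ.card : ℝ) - ∑ b ∈ Sᶜ, Hb b h := by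
    rw [Finset.sum_sub_distrib]
    simp
  have h2n : (0:ℝ) ≤ 2 ^ n := by positivity
  have hfn : 2 ^ n * δ ≤ 2 ^ n * f n h := mul_le_mul_of_nonneg_left hδf h2n
  -- combine
  rw [← Finset.sum_div]
  nlinarith [hsplit1, hsplit2, hPX, hQA, hA, hcardc, hfn,
    mul_nonneg hδ0 h2n,
    mul_le_mul_of_nonneg_left hδ4 (mul_nonneg hδ0 h2n)]
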